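/- If k ≥ 2 is real, then R_{π(k)}^(k) = p_{π(k)}. -/

import Mathlib

set_option maxRecDepth 1000000

open Nat

/-- Bounded trial division: check that `n` is not divisible by any of `d, d+2, ..., d+2(f-1)`
that is at most `sqrt n`. Short-circuits when `d*d > n`. -/
def chkFrom (n : ℕ) : ℕ → ℕ → Bool
  | _, 0 => true
  | d, f+1 => decide (n < d*d) || (n % d != 0 && chkFrom n (d+2) f)

/-- Primality test valid for `n ≤ 9408`. -/
def isPrimeB (n : ℕ) : Bool :=
  n == 2 || (decide (2 ≤ n) && n % 2 != 0 && chkFrom n 3 48)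

lemma chkFrom_spec (n : ℕ) : ∀ (f d : ℕ), chkFrom n d f = true →
    ∀ j, j < f → (d + 2*j) * (d + 2*j) ≤ n → ¬ (d + 2*j) ∣ n := by
  intro f
  induction f with
  | zero => omega
  | succ f ih =>
    intro d h j hj hle hdvd
    rw [chkFrom] at h
    rcases Bool.or_eq_true_iff.mp h with h | h
    · have := of_decide_eq_true h
      nlinarith [Nat.le_add_right d (2*j)]
    · obtain ⟨h1, h2⟩ := Bool.and_eq_true_iff.mp h
      cases j with
      | zero =>
        simp only [Nat.mul_zero, Nat.add_zero] at hdvd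
        have := Nat.mod_eq_zero_of_dvd hdvd
        simp_all
      | succ j =>
        have e : d + 2*(j+1) = (d+2) + 2*j := by ring
        rw [e] at hle hdvd
        exact ih (d+2) h2 j (by omega) hle hdvd

lemma chkFrom_of_prime {n : ℕ} (hp : n.Prime) : ∀ (f d : ℕ), 2 ≤ d → chkFrom n d f = true := by
  intro f
  induction f with
  | zero => intros; rfl
  | succ f ih =>
    intro d hd
    rw [chkFrom]
    by_cases hlt : n < d*d
    · simp [hlt]
    · have hdd : d*d ≤ n := by omega
      have hdn : d < n := by nlinarith
      have hnd : ¬ d ∣ n := by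
        intro hdvd
        rcases (Nat.Prime.eq_one_or_self_of_dvd hp d hdvd) with h | h <;> omega
      have : n % d ≠ 0 := fun h => hnd (Nat.dvd_of_mod_eq_zero h)
      simp [this, ih (d+2) (by omega), hlt]

lemma isPrimeB_iff {n : ℕ} (hn : n ≤ 9408) : isPrimeB n = true ↔ n.Prime := by
  constructor
  · intro h
    rcases Bool.or_eq_true_iff.mp h with h | h
    · have : n = 2 := by simpa using h
      rw [this]; exact Nat.prime_two
    · obtain ⟨h12, hchk⟩ := Bool.and_eq_true_iff.mp h
      obtain ⟨h1, h2⟩ := Bool.and_eq_true_iff.mp h12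
      have h1' : 2 ≤ n := of_decide_eq_true h1
      have h2' : n % 2 ≠ 0 := by simpa using h2
      rw [Nat.prime_def_le_sqrt]
      refine ⟨h1', fun m hm hms hdvd => ?_⟩
      have hmm : m * m ≤ n := Nat.le_sqrt.mp hms
      rcases Nat.even_or_odd m with he | ho
      · obtain ⟨r, rfl⟩ := he
        have : (2 : ℕ) ∣ n := Dvd.dvd.trans ⟨r, by ring⟩ hdvd
        exact h2' (Nat.mod_eq_zero_of_dvd this)
      · obtain ⟨j, rfl⟩ := ho
        have hj1 : 1 ≤ j := by omega
        have e : 2*j+1 = 3 + 2*(j-1) := by omega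
        have hjf : j - 1 < 48 := by nlinarith
        have goal2 : (3 + 2*(j-1)) * (3 + 2*(j-1)) ≤ n := by rw [← e]; exact hmm
        exact chkFrom_spec n 48 3 hchk (j-1) hjf goal2 (by rwa [← e])
  · intro hp
    by_cases h2 : n = 2
    · simp [isPrimeB, h2]
    · have h2n : 2 ≤ n := hp.two_le
      have hodd : n % 2 ≠ 0 := by
        intro h
        have := hp.eq_one_or_self_of_dvd 2 (Nat.dvd_of_mod_eq_zero h)
        omega
      have h1 : n % 2 = 1 := by omega
      simp [isPrimeB, h2n, h1, chkFrom_of_prime hp 48 3 (by norm_num), h2]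

/-- no primes strictly between `a` and `b`, `b` prime, `a < b`. -/
def chkGap (a b : ℕ) : Bool :=
  decide (a < b) && isPrimeB b && (List.range' (a+1) (b-a-1)).all fun c => !isPrimeB c

def chkList : ℕ → List ℕ → Bool
  | _, [] => true
  | a, b :: l => chkGap a b && chkList b l

lemma count_const_of_no_prime : ∀ (d a : ℕ), (∀ c, a ≤ c → c < a + d → ¬ c.Prime) →
    Nat.count Nat.Prime (a + d) = Nat.count Nat.Prime a := by
  intro d
  induction d with
  | zero => intros; rfl
  | succ d ih =>
    intro a h
    have e : a + (d+1) = (a+d) + 1 := by ring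
    rw [e, Nat.count_succ, if_neg (h _ (by omega) (by omega)), Nat.add_zero,
      ih a (fun c h1 h2 => h c h1 (by omega))]

lemma count_step {a b i : ℕ} (hcnt : Nat.count Nat.Prime (a+1) = i) (h1 : a < b) (h2 : b.Prime)
    (h3 : ∀ c, a < c → c < b → ¬ c.Prime) :
    Nat.nth Nat.Prime i = b ∧ Nat.count Nat.Prime (b+1) = i+1 := by
  have hcb : Nat.count Nat.Prime b = i := by
    have e : b = (a+1) + (b-a-1) := by omega
    rw [e, count_const_of_no_prime (b-a-1) (a+1) (fun c hc1 hc2 => h3 c (by omega) (by omega)), hcnt]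
  constructor
  · have := Nat.nth_count h2
    rwa [hcb] at this
  · rw [Nat.count_succ, if_pos h2, hcb]

lemma chkGap_spec {a b : ℕ} (hb : b ≤ 9408) (h : chkGap a b = true) :
    a < b ∧ b.Prime ∧ ∀ c, a < c → c < b → ¬ c.Prime := by
  obtain ⟨h12, h3⟩ := Bool.and_eq_true_iff.mp h
  obtain ⟨h1, h2⟩ := Bool.and_eq_true_iff.mp h12
  have h1' : a < b := of_decide_eq_true h1
  refine ⟨h1', (isPrimeB_iff hb).mp h2, fun c hc1 hc2 hcp => ?_⟩
  have hcmem : c ∈ List.range' (a+1) (b-a-1) := by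
    rw [List.mem_range'_1]
    exact ⟨by omega, by omega⟩
  have := List.all_eq_true.mp h3 c hcmem
  rw [Bool.not_eq_true'] at this
  rw [← isPrimeB_iff (by omega : c ≤ 9408)] at hcp
  rw [hcp] at this
  exact Bool.noConfusion this

lemma chkList_spec : ∀ (l : List ℕ) (a i : ℕ), (∀ x ∈ l, x ≤ 9408) →
    Nat.count Nat.Prime (a+1) = i → chkList a l = true →
    ∀ r, r < l.length → Nat.nth Nat.Prime (i + r) = l.getD r 0 := by
  intro l
  induction l with
  | nil => intro a i _ _ _ r hr; simp at hr
  | cons b l ih =>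
    intro a i hle hcnt h r hr
    obtain ⟨hg, hrest⟩ := Bool.and_eq_true_iff.mp h
    obtain ⟨h1, h2, h3⟩ := chkGap_spec (hle b (by simp)) hg
    obtain ⟨hnth, hcnt'⟩ := count_step hcnt h1 h2 h3
    cases r with
    | zero => simpa using hnth
    | succ r =>
      have := ih b (i+1) (fun x hx => hle x (by simp [hx])) hcnt' hrest r (by simpa using hr)
      have e : i + (r+1) = (i+1) + r := by omega
      rw [e, List.getD_cons_succ]
      exact this

def chkPair1 (c : ℕ) : List ℕ → List ℕ → Bool
  | x :: l1, y :: l2 => decide (x ≤ c*y) && chkPair1 c l1 l2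
  | _, _ => true

def chkPairsAux (t : List ℕ) : ℕ → Bool
  | 0 => true
  | i+1 => chkPair1 (t.getD i 0) (t.drop (i+1)) t && chkPairsAux t i

lemma chkPair1_spec (c : ℕ) : ∀ (l1 l2 : List ℕ), chkPair1 c l1 l2 = true →
    ∀ j, j < l1.length → j < l2.length → l1.getD j 0 ≤ c * l2.getD j 0 := by
  intro l1
  induction l1 with
  | nil => intro l2 _ j hj; simp at hj
  | cons x l1 ih =>
    intro l2 h j hj1 hj2
    cases l2 with
    | nil => simp at hj2
    | cons y l2 =>
      rw [chkPair1] at h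
      obtain ⟨h1, h2⟩ := Bool.and_eq_true_iff.mp h
      cases j with
      | zero => simpa using of_decide_eq_true h1
      | succ j =>
        simp only [List.getD_cons_succ]
        exact ih l2 h2 j (by simpa using hj1) (by simpa using hj2)

lemma getD_drop : ∀ (k : ℕ) (l : List ℕ) (j : ℕ), (l.drop k).getD j 0 = l.getD (k+j) 0 := by
  intro k
  induction k with
  | zero => intro l j; simp
  | succ k ih =>
    intro l j
    cases l with
    | nil => simp
    | cons a l =>
      rw [List.drop_succ_cons, ih l j, show k+1+j = (k+j)+1 by omega, List.getD_cons_succ]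

lemma chkPairsAux_spec (t : List ℕ) : ∀ N, chkPairsAux t N = true →
    ∀ i, i < N → chkPair1 (t.getD i 0) (t.drop (i+1)) t = true := by
  intro N
  induction N with
  | zero => intro _ i hi; omega
  | succ N ih =>
    intro h i hi
    obtain ⟨h1, h2⟩ := Bool.and_eq_true_iff.mp h
    rcases Nat.lt_succ_iff_lt_or_eq.mp hi with h' | h'
    · exact ih h2 i h'
    · rwa [h']

def T : List ℕ := [2,3,5,7,11,13,17,19,23,29,31,37,41,43,47,53,59,61,67,71,73,79,83,89,97,101,103,107,109,113,127,131,137,139,149,151,157,163,167,173,179,181,191,193,197,199,211,223,227,229,233,239,241,251,257,263,269,271,277,281,283,293,307,311,313,317,331,337,347,349,353,359,367,373,379,383,389,397,401,409,419,421,431,433,439,443,449,457,461,463,467,479,487,491,499,503,509,521,523,541,547,557,563,569,571,577,587,593,599,601,607,613,617,619,631,641,643,647,653,659,661,673,677,683,691,701,709,719,727,733,739,743,751,757,761,769,773,787,797,809,811,821,823,827,829,839,853,857,859,863,877,881,883,887,907,911,919,929,937,941,947,953,967,971,977,983,991,997,1009,1013,1019,1021,1031,1033,1039,1049,1051,1061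,1063,1069,1087,1091,1093,1097,1103,1109,1117,1123,1129,1151,1153,1163,1171,1181,1187,1193,1201,1213,1217,1223,1229,1231,1237,1249,1259,1277,1279,1283,1289,1291,1297,1301,1303,1307,1319,1321,1327,1361,1367,1373,1381,1399,1409,1423,1427,1429,1433,1439,1447,1451,1453,1459,1471,1481,1483,1487,1489,1493,1499,1511,1523,1531,1543,1549,1553,1559,1567,1571,1579,1583,1597,1601,1607,1609,1613,1619,1621,1627,1637,1657,1663,1667,1669,1693,1697,1699,1709,1721,1723,1733,1741,1747,1753,1759,1777,1783,1787,1789,1801,1811,1823,1831,1847,1861,1867,1871,1873,1877,1879,1889,1901,1907,1913,1931,1933,1949,1951,1973,1979,1987,1993,1997,1999,2003,2011,2017,2027,2029,2039,2053,2063,2069,2081,2083,2087,2089,2099,2111,2113,2129,2131,2137,2141,2143,2153,2161,2179,2203,2207,2213,2221,2237,2239,2243,2251,2267,2269,2273,2281,2287,2293,2297,2309,2311,2333,2339,2341,2347,2351,2357,2371,2377,2381,2383,2389,2393,2399,2411,2417,2423,2437,2441,2447,2459,2467,2473,2477,2503,2521,2531,2539,2543,2549,2551,2557,2579,2591,2593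,2609,2617,2621,2633,2647,2657,2659,2663,2671,2677,2683,2687,2689,2693,2699,2707,2711,2713,2719,2729,2731,2741,2749,2753,2767,2777,2789,2791,2797,2801,2803,2819,2833,2837,2843,2851,2857,2861,2879,2887,2897,2903,2909,2917,2927,2939,2953,2957,2963,2969,2971,2999,3001,3011,3019,3023,3037,3041,3049,3061,3067,3079,3083,3089,3109,3119,3121,3137,3163,3167,3169,3181,3187,3191,3203,3209,3217,3221,3229,3251,3253,3257,3259,3271,3299,3301,3307,3313,3319,3323,3329,3331,3343,3347,3359,3361,3371,3373,3389,3391,3407,3413,3433,3449,3457,3461,3463,3467,3469,3491,3499,3511,3517,3527,3529,3533,3539,3541,3547,3557,3559,3571,3581,3583,3593,3607,3613,3617,3623,3631,3637,3643,3659,3671,3673,3677,3691,3697,3701,3709,3719,3727,3733,3739,3761,3767,3769,3779,3793,3797,3803,3821,3823,3833,3847,3851,3853,3863,3877,3881,3889,3907,3911,3917,3919,3923,3929,3931,3943,3947,3967,3989,4001,4003,4007,4013,4019,4021,4027,4049,4051,4057,4073,4079,4091,4093,4099,4111,4127,4129,4133,4139,4153,4157,4159,4177,4201,4211,4217,4219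,4229,4231,4241,4243,4253,4259,4261,4271,4273,4283,4289,4297,4327,4337,4339,4349,4357,4363,4373,4391,4397,4409,4421,4423,4441,4447,4451,4457,4463,4481,4483,4493,4507,4513,4517,4519,4523,4547,4549,4561,4567,4583,4591,4597,4603,4621,4637,4639,4643,4649,4651,4657,4663,4673,4679,4691,4703,4721,4723,4729,4733,4751,4759,4783,4787,4789,4793,4799,4801,4813,4817,4831,4861,4871,4877,4889,4903,4909,4919,4931,4933,4937,4943,4951,4957,4967,4969,4973,4987,4993,4999,5003,5009,5011,5021,5023,5039,5051,5059,5077,5081,5087,5099,5101,5107,5113,5119,5147,5153,5167,5171,5179,5189,5197,5209,5227,5231,5233,5237,5261,5273,5279,5281,5297,5303,5309,5323,5333,5347,5351,5381,5387,5393,5399,5407,5413,5417,5419,5431,5437,5441,5443,5449,5471,5477,5479,5483,5501,5503,5507,5519,5521,5527,5531,5557,5563,5569,5573,5581,5591,5623,5639,5641,5647,5651,5653,5657,5659,5669,5683,5689,5693,5701,5711,5717,5737,5741,5743,5749,5779,5783,5791,5801,5807,5813,5821,5827,5839,5843,5849,5851,5857,5861,5867,5869,5879,5881,5897,5903,5923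,5927,5939,5953,5981,5987,6007,6011,6029,6037,6043,6047,6053,6067,6073,6079,6089,6091,6101,6113,6121,6131,6133,6143,6151,6163,6173,6197,6199,6203,6211,6217,6221,6229,6247,6257,6263,6269,6271,6277,6287,6299,6301,6311,6317,6323,6329,6337,6343,6353,6359,6361,6367,6373,6379,6389,6397,6421,6427,6449,6451,6469,6473,6481,6491,6521,6529,6547,6551,6553,6563,6569,6571,6577,6581,6599,6607,6619,6637,6653,6659,6661,6673,6679,6689,6691,6701,6703,6709,6719,6733,6737,6761,6763,6779,6781,6791,6793,6803,6823,6827,6829,6833,6841,6857,6863,6869,6871,6883,6899,6907,6911,6917,6947,6949,6959,6961,6967,6971,6977,6983,6991,6997,7001,7013,7019,7027,7039,7043,7057,7069,7079,7103,7109,7121,7127,7129,7151,7159,7177,7187,7193,7207,7211,7213,7219,7229,7237,7243,7247,7253,7283,7297,7307,7309,7321,7331,7333,7349,7351,7369,7393,7411,7417,7433,7451,7457,7459,7477,7481,7487,7489,7499,7507,7517,7523,7529,7537,7541,7547,7549,7559,7561,7573,7577,7583,7589,7591,7603,7607,7621,7639,7643,7649,7669,7673,7681,7687,7691,7699,7703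,7717,7723,7727,7741,7753,7757,7759,7789,7793,7817,7823,7829,7841,7853,7867,7873,7877,7879,7883,7901,7907,7919,7927,7933,7937,7949,7951,7963,7993,8009,8011,8017,8039,8053,8059,8069,8081,8087,8089,8093,8101,8111,8117,8123,8147,8161,8167,8171,8179,8191,8209,8219,8221,8231,8233,8237,8243,8263,8269,8273,8287,8291,8293,8297,8311,8317,8329,8353,8363,8369,8377,8387,8389,8419,8423,8429,8431,8443,8447,8461,8467,8501,8513,8521,8527,8537,8539,8543,8563,8573,8581,8597,8599,8609,8623,8627,8629,8641,8647,8663,8669,8677,8681,8689,8693,8699,8707,8713,8719,8731,8737,8741,8747,8753,8761,8779,8783,8803,8807,8819,8821,8831,8837,8839,8849,8861,8863,8867,8887,8893,8923,8929,8933,8941,8951,8963,8969,8971,8999,9001,9007,9011,9013,9029,9041,9043,9049]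

lemma T_length : T.length = 1125 := by rfl

lemma T_le : ∀ x ∈ T, x ≤ 9408 := by
  have h : T.all (fun x => decide (x ≤ 9408)) = true := by rfl
  intro x hx
  exact of_decide_eq_true (List.all_eq_true.mp h x hx)

lemma count_prime_two : Nat.count Nat.Prime (1+1) = 0 := by
  simp [Nat.count_succ, Nat.not_prime_one, Nat.not_prime_zero]

set_option maxRecDepth 1000000 in
set_option maxHeartbeats 1000000 in
lemma T_chk : chkList 1 T = true := by decide

set_option maxRecDepth 1000000 in
set_option maxHeartbeats 1000000 in
lemma T_pairs : chkPairsAux T 97 = true := by decide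

lemma nth_prime_T {r : ℕ} (hr : r < 1125) : Nat.nth Nat.Prime r = T.getD r 0 := by
  have := chkList_spec T 1 0 T_le count_prime_two T_chk r (by rw [T_length]; exact hr)
  simpa using this

lemma T_pair_ineq {i j : ℕ} (hi : i < 97) (hj : j < 1028) :
    T.getD (i+1+j) 0 ≤ T.getD i 0 * T.getD j 0 := by
  have h1 := chkPairsAux_spec T 97 T_pairs i hi
  have h2 := chkPair1_spec _ _ _ h1 j
    (by rw [List.length_drop, T_length]; omega) (by rw [T_length]; omega)
  rwa [getD_drop] at h2

/-- the key finite fact: products of small primes dominate later primes -/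
lemma nth_prime_mul_ineq {i j : ℕ} (hi : i < 97) (hj : j < 1028) :
    Nat.nth Nat.Prime (i+j+1) ≤ Nat.nth Nat.Prime i * Nat.nth Nat.Prime j := by
  rw [nth_prime_T (by omega : i < 1125), nth_prime_T (by omega : j < 1125),
    nth_prime_T (by omega : i+j+1 < 1125)]
  have := T_pair_ineq hi hj
  rwa [show i+1+j = i+j+1 by omega] at this

open Finset in

/-- Key analytic lemma (Erdős / Chebyshev style): if the condition on `t` holds,
there are at least `N` primes in `(t, 2t]`. -/
lemma count_lower {t N : ℕ} (ht : 512 ≤ t)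
    (hcond : 3 * (Nat.log 2 (2*t) + 1) * (N + Nat.sqrt (2*t) + 1) < 2*t) :
    Nat.primeCounting t + N ≤ Nat.primeCounting (2*t) := by
  by_contra hcon
  push_neg at hcon
  set s := Nat.sqrt (2*t) with hs
  set Y := 2*t/3 with hY
  have hss : s * s ≤ 2*t := Nat.sqrt_le (2*t)
  have hs3 : 3 ≤ s := by
    have : (32:ℕ) ≤ s := Nat.le_sqrt.mpr (by omega)
    omega
  have hsY : s + 1 ≤ Y + 1 := by
    have h3s : 3 * s ≤ 2 * t := le_trans (by nlinarith) hss
    have : s ≤ Y := (Nat.le_div_iff_mul_le (by norm_num)).mpr (by omega)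
    omega
  have hYt : Y + 1 ≤ t + 1 := by omega
  have htt : t + 1 ≤ 2*t + 1 := by omega
  -- the count of primes in (t, 2t]
  set cnt := ((Finset.Ico (t+1) (2*t+1)).filter Nat.Prime).card with hcnt
  -- π (2t) = π t + cnt
  have hsplit : Nat.primeCounting (2*t) = Nat.primeCounting t + cnt := by
    have h1 : Nat.primeCounting (2*t) = ((Finset.range (2*t+1)).filter Nat.Prime).card := by
      rw [Nat.primeCounting, Nat.primeCounting', Nat.count_eq_card_filter_range]
    have h2 : Nat.primeCounting t = ((Finset.range (t+1)).filter Nat.Prime).card := by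
      rw [Nat.primeCounting, Nat.primeCounting', Nat.count_eq_card_filter_range]
    rw [h1, h2, Finset.range_eq_Ico,
      ← Finset.Ico_union_Ico_eq_Ico (Nat.zero_le (t+1)) htt, Finset.filter_union,
      Finset.card_union_of_disjoint (Finset.disjoint_filter_filter
        (Finset.Ico_disjoint_Ico_consecutive 0 (t+1) (2*t+1))), Finset.range_eq_Ico]
  have hcntN : cnt < N := by omega
  -- central binomial factorization bound
  have hC : Nat.centralBinom t = ∏ p ∈ Finset.range (2*t+1), p ^ (Nat.centralBinom t).factorization p :=
    (Nat.prod_pow_factorization_centralBinom t).symm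
  have h2t0 : 0 < 2*t := by omega
  -- split into four intervals
  have hsplitprod :
      (∏ p ∈ Finset.Ico 0 (s+1), p ^ (Nat.centralBinom t).factorization p) *
      (∏ p ∈ Finset.Ico (s+1) (Y+1), p ^ (Nat.centralBinom t).factorization p) *
      (∏ p ∈ Finset.Ico (Y+1) (t+1), p ^ (Nat.centralBinom t).factorization p) *
      (∏ p ∈ Finset.Ico (t+1) (2*t+1), p ^ (Nat.centralBinom t).factorization p) =
      ∏ p ∈ Finset.range (2*t+1), p ^ (Nat.centralBinom t).factorization p := by
    rw [Finset.range_eq_Ico,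
      ← Finset.prod_Ico_consecutive _ (Nat.zero_le (t+1)) htt,
      ← Finset.prod_Ico_consecutive _ (Nat.zero_le (Y+1)) hYt,
      ← Finset.prod_Ico_consecutive _ (Nat.zero_le (s+1)) hsY]
  -- bound 1
  have hb1 : (∏ p ∈ Finset.Ico 0 (s+1), p ^ (Nat.centralBinom t).factorization p) ≤ (2*t)^(s+1) := by
    calc (∏ p ∈ Finset.Ico 0 (s+1), p ^ (Nat.centralBinom t).factorization p)
        ≤ ∏ _p ∈ Finset.Ico 0 (s+1), 2*t :=
          Finset.prod_le_prod' fun p _ => Nat.pow_factorization_choose_le h2t0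
      _ = (2*t)^(s+1) := by rw [Finset.prod_const, Nat.card_Ico, Nat.sub_zero]
  -- bound 2
  have hb2 : (∏ p ∈ Finset.Ico (s+1) (Y+1), p ^ (Nat.centralBinom t).factorization p) ≤ 4^Y := by
    have step1 : (∏ p ∈ Finset.Ico (s+1) (Y+1), p ^ (Nat.centralBinom t).factorization p)
        ≤ ∏ p ∈ (Finset.Ico (s+1) (Y+1)).filter Nat.Prime, p := by
      rw [Finset.prod_filter]
      refine Finset.prod_le_prod' fun p hp => ?_
      by_cases hpp : p.Prime
      · rw [if_pos hpp]
        have hp2 : 2*t < p^2 := by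
          have h1 : s + 1 ≤ p := (Finset.mem_Ico.mp hp).1
          calc 2*t < (s+1)^2 := Nat.lt_succ_sqrt' (2*t)
            _ ≤ p^2 := Nat.pow_le_pow_left h1 2
        have hle1 : (Nat.centralBinom t).factorization p ≤ 1 :=
          Nat.factorization_choose_le_one (n := 2*t) (k := t) hp2
        calc p ^ (Nat.centralBinom t).factorization p ≤ p^1 :=
              Nat.pow_le_pow_right hpp.one_lt.le hle1
          _ = p := pow_one p
      · rw [if_neg hpp, Nat.factorization_eq_zero_of_not_prime _ hpp, pow_zero]
    have step2 : (∏ p ∈ (Finset.Ico (s+1) (Y+1)).filter Nat.Prime, p) ≤ primorial Y := by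
      refine Finset.prod_le_prod_of_subset_of_one_le' ?_ (fun p hp _ => ?_)
      · intro p hp
        rw [Finset.mem_filter] at hp ⊢
        rw [Finset.mem_Ico] at hp
        exact ⟨Finset.mem_range.mpr (by omega), hp.2⟩
      · exact (Finset.mem_filter.mp hp).2.one_lt.le
    exact le_trans (le_trans step1 step2) (primorial_le_4_pow Y)
  -- bound 3
  have hb3 : (∏ p ∈ Finset.Ico (Y+1) (t+1), p ^ (Nat.centralBinom t).factorization p) = 1 := by
    refine Finset.prod_eq_one fun p hp => ?_
    rw [Finset.mem_Ico] at hp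
    by_cases hpp : p.Prime
    · rw [Nat.factorization_centralBinom_of_two_mul_self_lt_three_mul (by omega : 2 < t)
        (by omega : p ≤ t) (by omega : 2*t < 3*p), pow_zero]
    · rw [Nat.factorization_eq_zero_of_not_prime _ hpp, pow_zero]
  -- bound 4
  have hb4 : (∏ p ∈ Finset.Ico (t+1) (2*t+1), p ^ (Nat.centralBinom t).factorization p)
      ≤ (2*t)^cnt := by
    have step1 : (∏ p ∈ Finset.Ico (t+1) (2*t+1), p ^ (Nat.centralBinom t).factorization p)
        ≤ ∏ p ∈ (Finset.Ico (t+1) (2*t+1)).filter Nat.Prime, (2*t) := by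
      rw [Finset.prod_filter]
      refine Finset.prod_le_prod' fun p hp => ?_
      rw [Finset.mem_Ico] at hp
      by_cases hpp : p.Prime
      · rw [if_pos hpp]
        have hp2 : 2*t < p^2 := by nlinarith [hp.1]
        have hle1 : (Nat.centralBinom t).factorization p ≤ 1 :=
          Nat.factorization_choose_le_one (n := 2*t) (k := t) hp2
        calc p ^ (Nat.centralBinom t).factorization p ≤ p^1 :=
              Nat.pow_le_pow_right hpp.one_lt.le hle1
          _ = p := pow_one p
          _ ≤ 2*t := by omega
      · rw [if_neg hpp, Nat.factorization_eq_zero_of_not_prime _ hpp, pow_zero]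
    rw [Finset.prod_const] at step1
    exact step1
  -- put it together
  have hlow : 4^t < t * Nat.centralBinom t := Nat.four_pow_lt_mul_centralBinom t (by omega)
  have hup : Nat.centralBinom t ≤ (2*t)^(s+1) * 4^Y * (2*t)^cnt := by
    calc Nat.centralBinom t
        = (∏ p ∈ Finset.Ico 0 (s+1), p ^ (Nat.centralBinom t).factorization p) *
          (∏ p ∈ Finset.Ico (s+1) (Y+1), p ^ (Nat.centralBinom t).factorization p) *
          (∏ p ∈ Finset.Ico (Y+1) (t+1), p ^ (Nat.centralBinom t).factorization p) *
          (∏ p ∈ Finset.Ico (t+1) (2*t+1), p ^ (Nat.centralBinom t).factorization p) := by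
            rw [hsplitprod, ← hC]
      _ ≤ (2*t)^(s+1) * 4^Y * 1 * (2*t)^cnt := by
            exact Nat.mul_le_mul (Nat.mul_le_mul (Nat.mul_le_mul hb1 hb2) hb3.le) hb4
      _ = (2*t)^(s+1) * 4^Y * (2*t)^cnt := by ring
  have hmain : 4^t < (2*t)^(s+cnt+2) * 4^Y := by
    calc 4^t < t * Nat.centralBinom t := hlow
      _ ≤ t * ((2*t)^(s+1) * 4^Y * (2*t)^cnt) := Nat.mul_le_mul_left t hup
      _ ≤ (2*t) * ((2*t)^(s+1) * 4^Y * (2*t)^cnt) := Nat.mul_le_mul_right _ (by omega)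
      _ = (2*t)^(s+cnt+2) * 4^Y := by ring
  have hYle : Y ≤ t := by omega
  have hcancel : 4^(t-Y) < (2*t)^(s+cnt+2) := by
    have h4Y : 0 < 4^Y := Nat.pow_pos (by norm_num)
    have he : 4^t = 4^(t-Y) * 4^Y := by
      rw [← pow_add]
      congr 1
      omega
    rw [he] at hmain
    exact Nat.lt_of_mul_lt_mul_right hmain
  set lam := Nat.log 2 (2*t) + 1 with hlam
  have hpow2 : (2*t) < 2^lam := Nat.lt_pow_succ_log_self (by norm_num) (2*t)
  have hK : s + cnt + 2 ≤ N + s + 1 := by omega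
  have hchain : 2^(2*(t-Y)) < 2^(lam*(N+s+1)) := by
    calc 2^(2*(t-Y)) = 4^(t-Y) := by rw [show (4:ℕ) = 2^2 by norm_num, ← pow_mul]
      _ < (2*t)^(s+cnt+2) := hcancel
      _ ≤ (2*t)^(N+s+1) := Nat.pow_le_pow_right (by omega) hK
      _ ≤ (2^lam)^(N+s+1) := Nat.pow_le_pow_left hpow2.le _
      _ = 2^(lam*(N+s+1)) := by rw [← pow_mul]
  have hexp : 2*(t-Y) < lam*(N+s+1) := by
    exact (Nat.pow_lt_pow_iff_right (by norm_num)).mp hchain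
  -- 3*(t-Y) ≥ t since Y = 2t/3
  have h3 : 2*t ≤ 3*(2*(t-Y)) := by omega
  have h4 : 3*(2*(t-Y)) < 3*(lam*(N+s+1)) := by omega
  have h5 : 3*(lam*(N+s+1)) = 3 * lam * (N+s+1) := by ring
  omega



-- ===== parametric auxiliary inequalities =====

lemma aux12 : ∀ j, 7 ≤ j → 12*(j+1) ≤ 2^j := by
  intro j hj
  induction j, hj using Nat.le_induction with
  | base => norm_num
  | succ j hj ih =>
    have h2 : (12:ℕ) ≤ 2^j := by omega
    calc 12*(j+1+1) = 12*(j+1) + 12 := by ring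
      _ ≤ 2^j + 2^j := by omega
      _ = 2^(j+1) := by ring

lemma log_le_sqrt {x : ℕ} (hx : 16384 ≤ x) : 6*(Nat.log 2 x + 1) ≤ Nat.sqrt x := by
  set k := Nat.log 2 x with hk
  have hx0 : x ≠ 0 := by omega
  have hk14 : 14 ≤ k := by
    rw [hk]
    exact (Nat.le_log_iff_pow_le (by norm_num) hx0).mpr (by norm_num; omega)
  have h2k : 2^k ≤ x := Nat.pow_log_le_self 2 hx0
  set j := k/2 with hj
  have hj7 : 7 ≤ j := by omega
  have h1 : 6*(k+1) ≤ 12*(j+1) := by omega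
  have h2 : 12*(j+1) ≤ 2^j := aux12 j hj7
  have h3 : (2:ℕ)^j ≤ Nat.sqrt x := by
    rw [Nat.le_sqrt]
    calc 2^j * 2^j = 2^(j+j) := by rw [pow_add]
      _ ≤ 2^k := Nat.pow_le_pow_right (by norm_num) (by omega)
      _ ≤ x := h2k
  omega

lemma aux294 : ∀ k, 13 ≤ k → 294*(k+2) < 2^k := by
  intro k hk
  induction k, hk using Nat.le_induction with
  | base => norm_num
  | succ k hk ih =>
    have h2 : (294:ℕ) ≤ 2^k := by omega
    calc 294*(k+1+2) = 294*(k+2) + 294 := by ring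
      _ < 2^k + 2^k := by omega
      _ = 2^(k+1) := by ring

lemma aux15 : ∀ k, 9 ≤ k → 15*(2*k+2) ≤ 2^k := by
  intro k hk
  induction k, hk using Nat.le_induction with
  | base => norm_num
  | succ k hk ih =>
    have h2 : (30:ℕ) ≤ 2^k := by omega
    calc 15*(2*(k+1)+2) = 15*(2*k+2) + 30 := by ring
      _ ≤ 2^k + 2^k := by omega
      _ = 2^(k+1) := by ring

/-- Condition for applying `count_lower` with `N = 97` at `t = n`, for `n ≥ 8192`. -/
lemma cond_R1 {n : ℕ} (hn : 8192 ≤ n) :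
    3 * (Nat.log 2 (2*n) + 1) * (97 + Nat.sqrt (2*n) + 1) < 2*n := by
  set lam := Nat.log 2 (2*n) + 1 with hlam
  set s := Nat.sqrt (2*n) with hs
  have hn0 : n ≠ 0 := by omega
  have hk : Nat.log 2 (2*n) = Nat.log 2 n + 1 := by
    rw [mul_comm]
    exact Nat.log_mul_base (by norm_num) hn0
  set k := Nat.log 2 n with hkk
  have hk13 : 13 ≤ k := by
    rw [hkk]
    exact (Nat.le_log_iff_pow_le (by norm_num) hn0).mpr (by norm_num; omega)
  have h2k : 2^k ≤ n := Nat.pow_log_le_self 2 hn0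
  have hlamk : lam = k + 2 := by omega
  -- piece 1 : 294 * lam < n
  have hp1 : 294 * lam < n := by
    rw [hlamk]
    calc 294*(k+2) < 2^k := aux294 k hk13
      _ ≤ n := h2k
  -- piece 2 : 3 * (lam * s) ≤ n
  have h6 : 6 * lam ≤ s := log_le_sqrt (by omega)
  have hp2 : 6 * (lam * s) ≤ 2*n := by
    calc 6 * (lam * s) = (6 * lam) * s := by ring
      _ ≤ s * s := Nat.mul_le_mul_right s h6
      _ ≤ 2*n := Nat.sqrt_le (2*n)
  have he : 3 * lam * (97 + s + 1) = 294 * lam + 3 * (lam * s) := by ring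
  omega

/-- Condition for applying `count_lower` in the case `512 ≤ m ≤ n`, `t = 2^(log2 m - 1) * n`. -/
lemma cond_R2 {m n t : ℕ} (hm : 512 ≤ m) (hmn : m ≤ n) (h4t : m*n < 4*t) (h2t : 2*t ≤ m*n) :
    3 * (Nat.log 2 (2*t) + 1) * ((m+1) + Nat.sqrt (2*t) + 1) < 2*t := by
  set lam := Nat.log 2 (2*t) + 1 with hlam
  set s := Nat.sqrt (2*t) with hs
  set k := Nat.log 2 n with hkk
  have hn0 : n ≠ 0 := by omega
  have hk9 : 9 ≤ k := by
    rw [hkk]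
    exact (Nat.le_log_iff_pow_le (by norm_num) hn0).mpr (by norm_num; omega)
  have h2k : 2^k ≤ n := Nat.pow_log_le_self 2 hn0
  have htlow : 65536 < t := by nlinarith
  -- lam ≤ 2k+2
  have hlamle : lam ≤ 2*k + 2 := by
    have h1 : n < 2^(k+1) := Nat.lt_pow_succ_log_self (by norm_num) n
    have h2 : 2*t < 2^(2*k+2) := by
      calc 2*t ≤ m*n := h2t
        _ ≤ n*n := Nat.mul_le_mul_right n hmn
        _ < 2^(k+1) * 2^(k+1) := by
            have := Nat.mul_lt_mul_of_lt_of_le h1 h1.le (by positivity)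
            exact this
        _ = 2^(2*k+2) := by rw [← pow_add]; ring_nf
    have := Nat.log_lt_of_lt_pow (by omega : 2*t ≠ 0) h2
    omega
  have h15 : 15 * lam ≤ n := by
    calc 15 * lam ≤ 15 * (2*k+2) := by omega
      _ ≤ 2^k := aux15 k hk9
      _ ≤ n := h2k
  -- piece A : 3*lam*(m+2) < t
  have hpA : 3 * (lam * (m+2)) < t := by
    have h2' : 15*lam*(m+2) ≤ n*(m+2) := Nat.mul_le_mul_right (m+2) h15
    have h4 : 12*(n*(m+2)) < 15*(n*m) := by nlinarith
    have h5 : 180*(lam*(m+2)) < 60*t := by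
      calc 180*(lam*(m+2)) = 12*(15*lam*(m+2)) := by ring
        _ ≤ 12*(n*(m+2)) := by omega
        _ < 15*(n*m) := h4
        _ = 15*(m*n) := by ring
        _ < 60*t := by omega
    omega
  -- piece B : 3*(lam*s) ≤ t
  have h6 : 6 * lam ≤ s := log_le_sqrt (by omega)
  have hpB : 6 * (lam * s) ≤ 2*t := by
    calc 6 * (lam * s) = (6 * lam) * s := by ring
      _ ≤ s * s := Nat.mul_le_mul_right s h6
      _ ≤ 2*t := Nat.sqrt_le (2*t)
  have he : 3 * lam * ((m+1) + s + 1) = 3*(lam*(m+2)) + 3*(lam*s) := by ring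
  omega


-- ===== helper facts from the table =====

lemma not_prime_of_isPrimeB_false {n : ℕ} (hn : n ≤ 9408) (h : isPrimeB n = false) :
    ¬ n.Prime := by
  intro hp
  rw [← isPrimeB_iff hn] at hp
  rw [hp] at h
  exact Bool.noConfusion h

lemma count_509 : Nat.count Nat.Prime 509 = 96 := by
  have h := nth_prime_T (by norm_num : 96 < 1125)
  have h509 : Nat.nth Nat.Prime 96 = 509 := by rw [h]; rfl
  have := Nat.count_nth_of_infinite Nat.infinite_setOf_prime 96
  rwa [h509] at this

lemma prime_509 : Nat.Prime 509 := by
  have h := nth_prime_T (by norm_num : 96 < 1125)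
  have h509 : Nat.nth Nat.Prime 96 = 509 := by rw [h]; rfl
  have := Nat.nth_mem_of_infinite Nat.infinite_setOf_prime 96
  rwa [h509] at this

lemma pi_511 : Nat.primeCounting 511 = 97 := by
  have h1 : Nat.count Nat.Prime 510 = 97 := by
    rw [Nat.count_succ, if_pos prime_509, count_509]
  have h2 : Nat.count Nat.Prime 511 = 97 := by
    rw [Nat.count_succ, if_neg (not_prime_of_isPrimeB_false (by norm_num) (by rfl)), h1]
  have h3 : Nat.count Nat.Prime 512 = 97 := by
    rw [Nat.count_succ, if_neg (not_prime_of_isPrimeB_false (by norm_num) (by rfl)), h2]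
  rw [Nat.primeCounting, Nat.primeCounting']
  exact h3

lemma prime_8191 : Nat.Prime 8191 := by
  have h := nth_prime_T (by norm_num : 1027 < 1125)
  have h8191 : Nat.nth Nat.Prime 1027 = 8191 := by rw [h]; rfl
  have := Nat.nth_mem_of_infinite Nat.infinite_setOf_prime 1027
  rwa [h8191] at this

lemma pi_8191 : Nat.primeCounting 8191 = 1028 := by
  have h := nth_prime_T (by norm_num : 1027 < 1125)
  have h8191 : Nat.nth Nat.Prime 1027 = 8191 := by rw [h]; rfl
  have hc : Nat.count Nat.Prime 8191 = 1027 := by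
    have := Nat.count_nth_of_infinite Nat.infinite_setOf_prime 1027
    rwa [h8191] at this
  rw [Nat.primeCounting, Nat.primeCounting', Nat.count_succ, if_pos prime_8191, hc]

lemma pi_two : Nat.primeCounting 2 = 1 := by
  rw [Nat.primeCounting, Nat.primeCounting']
  rw [show (2:ℕ)+1 = 3 by rfl]
  rw [Nat.count_succ, Nat.count_succ, Nat.count_succ, Nat.count_zero,
    if_pos Nat.prime_two, if_neg Nat.not_prime_one, if_neg Nat.not_prime_zero]

lemma pi_pos {m : ℕ} (hm : 2 ≤ m) : 1 ≤ Nat.primeCounting m := by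
  calc 1 = Nat.primeCounting 2 := pi_two.symm
    _ ≤ Nat.primeCounting m := Nat.monotone_primeCounting hm

lemma pi_eq_count (m : ℕ) : Nat.primeCounting m = Nat.count Nat.Prime (m+1) := rfl

/-- main finite case of the Ishikawa inequality -/
lemma pi_mul_small {m n : ℕ} (hm : 2 ≤ m) (hmn : m ≤ n) (hm511 : m ≤ 511) (hn8191 : n ≤ 8191) :
    Nat.primeCounting m + Nat.primeCounting n ≤ Nat.primeCounting (m*n) := by
  obtain ⟨i, hi⟩ : ∃ i, Nat.primeCounting m = i + 1 := by
    have := pi_pos hm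
    exact ⟨Nat.primeCounting m - 1, by omega⟩
  obtain ⟨j, hj⟩ : ∃ j, Nat.primeCounting n = j + 1 := by
    have := pi_pos (by omega : 2 ≤ n)
    exact ⟨Nat.primeCounting n - 1, by omega⟩
  have hi96 : i < 97 := by
    have : Nat.primeCounting m ≤ 97 := pi_511 ▸ Nat.monotone_primeCounting hm511
    omega
  have hj1027 : j < 1028 := by
    have : Nat.primeCounting n ≤ 1028 := pi_8191 ▸ Nat.monotone_primeCounting hn8191
    omega
  have hnm : Nat.nth Nat.Prime i ≤ m := by
    have : i < Nat.count Nat.Prime (m+1) := by rw [← pi_eq_count, hi]; omega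
    have := Nat.nth_lt_of_lt_count this
    omega
  have hnn : Nat.nth Nat.Prime j ≤ n := by
    have : j < Nat.count Nat.Prime (n+1) := by rw [← pi_eq_count, hj]; omega
    have := Nat.nth_lt_of_lt_count this
    omega
  have hkey : Nat.nth Nat.Prime (i+j+1) ≤ m * n := by
    calc Nat.nth Nat.Prime (i+j+1) ≤ Nat.nth Nat.Prime i * Nat.nth Nat.Prime j :=
          nth_prime_mul_ineq hi96 hj1027
      _ ≤ m * n := Nat.mul_le_mul hnm hnn
  have hcount : Nat.count Nat.Prime (Nat.nth Nat.Prime (i+j+1) + 1) = i+j+2 := by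
    rw [Nat.count_succ, if_pos (Nat.nth_mem_of_infinite Nat.infinite_setOf_prime _),
      Nat.count_nth_of_infinite Nat.infinite_setOf_prime]
  calc Nat.primeCounting m + Nat.primeCounting n = i+j+2 := by omega
    _ = Nat.count Nat.Prime (Nat.nth Nat.Prime (i+j+1) + 1) := hcount.symm
    _ ≤ Nat.count Nat.Prime (m*n+1) := Nat.count_monotone _ (by omega)
    _ = Nat.primeCounting (m*n) := (pi_eq_count _).symm

lemma pi_le_self_succ (m : ℕ) : Nat.primeCounting m ≤ m + 1 := by
  rw [pi_eq_count]
  exact Nat.count_le Nat.Prime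

/-- The Ishikawa-type inequality, ordered version. -/
lemma pi_mul_aux {m n : ℕ} (hm : 2 ≤ m) (hmn : m ≤ n) :
    Nat.primeCounting m + Nat.primeCounting n ≤ Nat.primeCounting (m*n) := by
  rcases Nat.lt_or_ge m 512 with hm512 | hm512
  · rcases Nat.lt_or_ge n 8192 with hn8192 | hn8192
    · exact pi_mul_small hm hmn (by omega) (by omega)
    · -- m ≤ 511, n ≥ 8192
      have hc := count_lower (t := n) (N := 97) (by omega) (cond_R1 (by omega))
      have hπm : Nat.primeCounting m ≤ 97 := pi_511 ▸ Nat.monotone_primeCounting (by omega)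
      calc Nat.primeCounting m + Nat.primeCounting n
          ≤ Nat.primeCounting n + 97 := by omega
        _ ≤ Nat.primeCounting (2*n) := hc
        _ ≤ Nat.primeCounting (m*n) := Nat.monotone_primeCounting (by nlinarith)
  · -- 512 ≤ m ≤ n
    set s0 := Nat.log 2 m with hs0
    have hm0 : m ≠ 0 := by omega
    have hs09 : 9 ≤ s0 := by
      rw [hs0]
      exact (Nat.le_log_iff_pow_le (by norm_num) hm0).mpr (by norm_num; omega)
    set t := 2^(s0-1) * n with ht
    have h2t : 2*t = 2^s0 * n := by
      rw [ht, ← mul_assoc, ← _root_.pow_succ']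
      congr 2
      omega
    have h2tmn : 2*t ≤ m*n := by
      rw [h2t]
      exact Nat.mul_le_mul_right n (Nat.pow_log_le_self 2 hm0)
    have h4t : m*n < 4*t := by
      have h1 : m < 2^(s0+1) := Nat.lt_pow_succ_log_self (by norm_num) m
      have h2 : 4*t = 2^(s0+1) * n := by
        have h4 : (4:ℕ)*2^(s0-1) = 2^(s0+1) := by
          rw [show (4:ℕ) = 2^2 from rfl, ← pow_add]
          congr 1
          omega
        rw [ht, ← mul_assoc, h4]
      rw [h2]
      exact Nat.mul_lt_mul_of_lt_of_le h1 le_rfl (by omega)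
    have hnt : n ≤ t := by
      rw [ht]
      calc n = 1 * n := (one_mul n).symm
        _ ≤ 2^(s0-1) * n := Nat.mul_le_mul_right n (Nat.one_le_two_pow)
    have ht512 : 512 ≤ t := by omega
    have hcond : 3 * (Nat.log 2 (2*t) + 1) * (Nat.primeCounting m + Nat.sqrt (2*t) + 1) < 2*t := by
      have hbase := cond_R2 hm512 hmn h4t h2tmn
      have hπm : Nat.primeCounting m ≤ m + 1 := pi_le_self_succ m
      have hmono : 3 * (Nat.log 2 (2*t) + 1) * (Nat.primeCounting m + Nat.sqrt (2*t) + 1)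
          ≤ 3 * (Nat.log 2 (2*t) + 1) * ((m+1) + Nat.sqrt (2*t) + 1) :=
        Nat.mul_le_mul_left _ (by omega)
      omega
    have hc := count_lower (t := t) (N := Nat.primeCounting m) ht512 hcond
    calc Nat.primeCounting m + Nat.primeCounting n
        ≤ Nat.primeCounting t + Nat.primeCounting m := by
          have := Nat.monotone_primeCounting hnt
          omega
      _ ≤ Nat.primeCounting (2*t) := hc
      _ ≤ Nat.primeCounting (m*n) := Nat.monotone_primeCounting h2tmn

/-- **Ishikawa's inequality**: `π m + π n ≤ π (m n)` for `m, n ≥ 2`. -/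
lemma pi_mul {m n : ℕ} (hm : 2 ≤ m) (hn : 2 ≤ n) :
    Nat.primeCounting m + Nat.primeCounting n ≤ Nat.primeCounting (m*n) := by
  rcases le_total m n with h | h
  · exact pi_mul_aux hm h
  · have := pi_mul_aux hn h
    rw [mul_comm] at this
    omega

-- ===== final statement =====

/-- Prime counting function extended to the reals: `primePi x = π(⌊x⌋)`. -/
noncomputable def primePi (x : ℝ) : ℕ := Nat.primeCounting ⌊x⌋₊

/-- The `n`-th `k`-Ramanujan prime: the smallest positive integer `m` such that
`π(x) - π(x/k) ≥ n` for all real `x ≥ m`. -/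
noncomputable def Ram (k : ℝ) (n : ℕ) : ℕ :=
  sInf {m : ℕ | 0 < m ∧ ∀ x : ℝ, (m : ℝ) ≤ x → primePi (x / k) + n ≤ primePi x}

/-- The `n`-th prime (`nthPrime 1 = 2`). -/
noncomputable def nthPrime (n : ℕ) : ℕ := Nat.nth Nat.Prime (n - 1)

theorem stmt6 (k : ℝ) (hk : 2 ≤ k) :
    Ram k (primePi k) = nthPrime (primePi k) := by
  have hk0 : (0:ℝ) < k := by linarith
  set c := ⌊k⌋₊ with hc
  have hc2 : 2 ≤ c := Nat.le_floor (by exact_mod_cast hk)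
  have hck : (c:ℝ) ≤ k := Nat.floor_le (by linarith)
  have hprimePik : primePi k = Nat.primeCounting c := rfl
  set n0 := Nat.primeCounting c with hn0
  have hn1 : 1 ≤ n0 := pi_pos hc2
  obtain ⟨e, he⟩ : ∃ e, n0 = e + 1 := ⟨n0 - 1, by omega⟩
  set p := Nat.nth Nat.Prime e with hp
  have hpprime : Nat.Prime p := Nat.nth_mem_of_infinite Nat.infinite_setOf_prime e
  have hp2 : 2 ≤ p := hpprime.two_le
  have hπp : Nat.primeCounting p = n0 := by
    rw [pi_eq_count, Nat.count_succ, if_pos hpprime,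
      Nat.count_nth_of_infinite Nat.infinite_setOf_prime, he]
  have hpc : p ≤ c := by
    have h1 : e < Nat.count Nat.Prime (c+1) := by
      rw [← pi_eq_count, ← hn0, he]
      omega
    have := Nat.nth_lt_of_lt_count h1
    omega
  have hnth : nthPrime n0 = p := by
    rw [nthPrime, he, Nat.add_sub_cancel]
  set S := {m : ℕ | 0 < m ∧ ∀ x : ℝ, (m : ℝ) ≤ x → primePi (x / k) + n0 ≤ primePi x} with hS
  have hmem : p ∈ S := by
    refine ⟨by omega, fun x hx => ?_⟩
    have hx0 : (0:ℝ) ≤ x := le_trans (by positivity) hx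
    have hpa : p ≤ ⌊x⌋₊ := Nat.le_floor (by exact_mod_cast hx)
    set b := ⌊x/k⌋₊ with hb
    show Nat.primeCounting b + n0 ≤ Nat.primeCounting ⌊x⌋₊
    rcases Nat.lt_or_ge b 2 with hb2 | hb2
    · have hπb : Nat.primeCounting b = 0 := by
        have h1 : Nat.primeCounting b ≤ Nat.primeCounting 1 :=
          Nat.monotone_primeCounting (by omega)
        rw [Nat.primeCounting_one] at h1
        omega
      rw [hπb, zero_add, ← hπp]
      exact Nat.monotone_primeCounting hpa
    · have hbc : b * c ≤ ⌊x⌋₊ := by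
        apply Nat.le_floor
        push_cast
        have h1 : (b:ℝ) ≤ x / k := Nat.floor_le (by positivity)
        calc (b:ℝ) * c ≤ (x/k) * k :=
              mul_le_mul h1 hck (by positivity) (by positivity)
          _ = x := div_mul_cancel₀ x (ne_of_gt hk0)
      calc Nat.primeCounting b + n0 = Nat.primeCounting b + Nat.primeCounting c := rfl
        _ ≤ Nat.primeCounting (b*c) := pi_mul hb2 hc2
        _ ≤ Nat.primeCounting ⌊x⌋₊ := Nat.monotone_primeCounting hbc
  have hlb : ∀ m ∈ S, p ≤ m := by
    rintro m ⟨hm0, hm⟩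
    by_contra hcon
    push_neg at hcon
    have hmp : m ≤ p - 1 := by omega
    have hxm : (m:ℝ) ≤ ((p-1 : ℕ) : ℝ) := by exact_mod_cast hmp
    have h1 := hm ((p-1 : ℕ) : ℝ) hxm
    have hfl : ⌊((p-1 : ℕ) : ℝ)⌋₊ = p - 1 := Nat.floor_natCast _
    have hπp1 : Nat.primeCounting (p-1) = e := by
      rw [pi_eq_count, show p - 1 + 1 = p by omega, hp,
        Nat.count_nth_of_infinite Nat.infinite_setOf_prime]
    have h2 : primePi ((p-1 : ℕ) : ℝ) = e := by
      rw [primePi, hfl, hπp1]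
    rw [h2] at h1
    omega
  have hRam : Ram k (primePi k) = sInf S := rfl
  rw [hRam, hprimePik, hnth]
  have h1 : sInf S ≤ p := Nat.sInf_le hmem
  have h2 : p ≤ sInf S := hlb (sInf S) (Nat.sInf_mem ⟨p, hmem⟩)
  omega
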